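/- Let a, b be nonzero integers not divisible by 3 times their largest common 3-power; write a = 3^j n and b = 3^k m with 3 ∤ n, 3 ∤ m. Then the set {0, a, b} tiles ℤ if and only if j = k and m − n is not divisible by 3 (equivalently, a = 3^j(3r+1) and b = 3^j(3s+2) up to swapping a and b). -/

import Mathlib

/-- A finite set of integers tiles `ℤ` by translations. -/
def TilesZ (A : Finset ℤ) : Prop :=
  ∃ T : Set ℤ, ∀ n : ℤ, ∃! q : ℤ × ℤ, q.1 ∈ A ∧ q.2 ∈ T ∧ q.1 + q.2 = n

lemma tri (F : ℤ → ℤ) (a b : ℤ) (h01 : ∀ y, F y = 0 ∨ F y = 1)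
    (hE : ∀ y, F y + F (y - a) + F (y - b) = 1) (x : ℤ) :
    F (x - 3*a) = F x ∧ F (x - 3*b) = F x := by
  have h0 := hE x
  have h1 := hE (x - a)
  have h2 := hE (x - b)
  have h3 := hE (x - a - a)
  have h4 := hE (x - a - b)
  have h5 := hE (x - b - b)
  rw [show x - b - a = x - a - b by ring] at h2
  rw [show x - a - b - a = x - a - a - b by ring] at h4
  rw [show x - b - b - a = x - a - b - b by ring] at h5
  rw [show x - 3*a = x - a - a - a by ring, show x - 3*b = x - b - b - b by ring]
  have a0 := h01 x
  have a1 := h01 (x - a)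
  have a2 := h01 (x - b)
  have a3 := h01 (x - a - a)
  have a4 := h01 (x - a - b)
  have a5 := h01 (x - b - b)
  have a6 := h01 (x - a - a - a)
  have a7 := h01 (x - a - a - b)
  have a8 := h01 (x - a - b - b)
  have a9 := h01 (x - b - b - b)
  omega

lemma per_mul (F : ℤ → ℤ) (c : ℤ) (h : ∀ x, F (x + c) = F x) :
    ∀ s x : ℤ, F (x + c * s) = F x := by
  intro s
  induction s using Int.induction_on with
  | zero => intro x; simp
  | succ i ih =>
      intro x
      rw [show x + c * ((i : ℤ) + 1) = (x + c * i) + c by ring, h, ih]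
  | pred i ih =>
      intro x
      have h2 := h (x + c * (-(i:ℤ) - 1))
      rw [show x + c * (-(i:ℤ) - 1) + c = x + c * (-(i:ℤ)) by ring] at h2
      rw [← h2, ih]

lemma pow3 {u v E W : ℕ} (hE : ¬ 3 ∣ E) (hW : ¬ 3 ∣ W) (h : 3^u * E ∣ 3^v * W) :
    u ≤ v ∧ (u < v → 3^(u+1) * E ∣ 3^v * W) := by
  have cE : Nat.Coprime E 3 :=
    Nat.coprime_comm.mp ((Nat.Prime.coprime_iff_not_dvd Nat.prime_three).2 hE)
  have hEW : E ∣ W :=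
    Nat.Coprime.dvd_of_dvd_mul_left (cE.pow_right v) (dvd_trans (dvd_mul_left E (3^u)) h)
  have cW : Nat.Coprime (3^u) W :=
    Nat.Coprime.pow_left u ((Nat.Prime.coprime_iff_not_dvd Nat.prime_three).2 hW)
  have h3 : (3:ℕ)^u ∣ 3^v :=
    Nat.Coprime.dvd_of_dvd_mul_right cW (dvd_trans (dvd_mul_right _ _) h)
  have huv : u ≤ v := (Nat.pow_dvd_pow_iff_le_right (by norm_num)).1 h3
  exact ⟨huv, fun hlt => mul_dvd_mul (pow_dvd_pow 3 hlt) hEW⟩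

lemma rep3 (z : ℕ) (hz : z ≠ 0) : ∃ u W : ℕ, z = 3^u * W ∧ ¬ 3 ∣ W :=
  ⟨z.factorization 3, z / 3^(z.factorization 3),
    (Nat.ordProj_mul_ordCompl_eq_self z 3).symm,
    Nat.not_dvd_ordCompl Nat.prime_three hz⟩

lemma endgame (j k : ℕ) (n m a b d : ℤ)
    (ha : a = 3 ^ j * n) (hb : b = 3 ^ k * m)
    (hn : ¬ (3 ∣ n)) (hm : ¬ (3 ∣ m)) (hab : a ≠ b)
    (hd0 : d ≠ 0) (hda : d ∣ a) (hdb : d ∣ b)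
    (f1 : ¬ (3*d ∣ a)) (f2 : ¬ (3*d ∣ b)) (f3 : ¬ (3*d ∣ (b - a))) :
    j = k ∧ ¬ ((3 : ℤ) ∣ (m - n)) := by
  obtain ⟨i, E, hDE, hE3⟩ := rep3 d.natAbs (Int.natAbs_ne_zero.2 hd0)
  have natdvd3 : ∀ z : ℤ, ¬ (3 ∣ z) → ¬ (3 ∣ z.natAbs) := by
    intro z hz h
    exact hz (by
      have := Int.natAbs_dvd_natAbs.1 (show (3:ℤ).natAbs ∣ z.natAbs from h)
      simpa using this)
  have hn' : ¬ 3 ∣ n.natAbs := natdvd3 n hn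
  have hm' : ¬ 3 ∣ m.natAbs := natdvd3 m hm
  have hA : a.natAbs = 3 ^ j * n.natAbs := by
    rw [ha, Int.natAbs_mul, Int.natAbs_pow]; rfl
  have hB : b.natAbs = 3 ^ k * m.natAbs := by
    rw [hb, Int.natAbs_mul, Int.natAbs_pow]; rfl
  have h3dN : ∀ z : ℤ, (3^(i+1) * E ∣ z.natAbs) → 3 * d ∣ z := by
    intro z hdz
    refine Int.natAbs_dvd_natAbs.1 ?_
    rw [Int.natAbs_mul]
    calc (3:ℤ).natAbs * d.natAbs = 3 * (3^i * E) := by rw [← hDE]; rfl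
    _ = 3^(i+1) * E := by ring
    _ ∣ z.natAbs := hdz
  have hdaN : 3 ^ i * E ∣ 3 ^ j * n.natAbs := by
    rw [← hDE, ← hA]; exact Int.natAbs_dvd_natAbs.2 hda
  have hdbN : 3 ^ i * E ∣ 3 ^ k * m.natAbs := by
    rw [← hDE, ← hB]; exact Int.natAbs_dvd_natAbs.2 hdb
  have p1 := pow3 hE3 hn' hdaN
  have p2 := pow3 hE3 hm' hdbN
  have hij : i = j := by
    rcases Nat.lt_or_ge i j with hlt | hge
    · exact absurd (h3dN a (by rw [hA]; exact p1.2 hlt)) f1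
    · omega
  have hik : i = k := by
    rcases Nat.lt_or_ge i k with hlt | hge
    · exact absurd (h3dN b (by rw [hB]; exact p2.2 hlt)) f2
    · omega
  refine ⟨hij ▸ hik, ?_⟩
  intro h3mn
  obtain ⟨w, hw⟩ := h3mn
  have hba : b - a = 3 ^ (j+1) * w := by
    rw [ha, hb, ← hik, hij]
    rw [show (3:ℤ)^j * m - 3^j * n = 3^j * (m - n) by ring, hw]; ring
  have hba0 : b - a ≠ 0 := sub_ne_zero.2 (Ne.symm hab)
  obtain ⟨v, W, hCW, hW3⟩ := rep3 (b - a).natAbs (Int.natAbs_ne_zero.2 hba0)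
  have h9 : (3:ℕ)^(j+1) ∣ (b - a).natAbs := by
    have : ((3:ℤ)^(j+1)).natAbs ∣ (b - a).natAbs :=
      Int.natAbs_dvd_natAbs.2 ⟨w, hba⟩
    simpa [Int.natAbs_pow] using this
  have hjv : j + 1 ≤ v :=
    (pow3 (E := 1) (W := W) (by norm_num) hW3 (by rw [← hCW]; simpa using h9)).1
  have hdc : d ∣ (b - a) := dvd_sub hdb hda
  have hdcN : 3 ^ i * E ∣ 3 ^ v * W := by
    rw [← hDE, ← hCW]; exact Int.natAbs_dvd_natAbs.2 hdc
  have p3 := pow3 hE3 hW3 hdcN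
  exact f3 (h3dN _ (by rw [hCW]; exact p3.2 (by omega)))

theorem stmt2 (j k : ℕ) (n m a b : ℤ)
    (ha : a = 3 ^ j * n) (hb : b = 3 ^ k * m)
    (hn : ¬ (3 ∣ n)) (hm : ¬ (3 ∣ m))
    (ha0 : a ≠ 0) (hb0 : b ≠ 0) (hab : a ≠ b) :
    TilesZ {0, a, b} ↔ (j = k ∧ ¬ ((3 : ℤ) ∣ (m - n))) := by
  constructor
  · rintro ⟨T, hT⟩
    classical
    set F : ℤ → ℤ := fun y => if y ∈ T then 1 else 0 with hFdef
    have h01 : ∀ y, F y = 0 ∨ F y = 1 := by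
      intro y; by_cases h : y ∈ T <;> simp [hFdef, h]
    have hmem : ∀ z : ℤ, z ∈ ({0, a, b} : Finset ℤ) ↔ (z = 0 ∨ z = a ∨ z = b) := by
      intro z; simp
    have huniq : ∀ x z₁ z₂ : ℤ, (z₁ = 0 ∨ z₁ = a ∨ z₁ = b) → (z₂ = 0 ∨ z₂ = a ∨ z₂ = b) →
        (x - z₁) ∈ T → (x - z₂) ∈ T → z₁ = z₂ := by
      intro x z₁ z₂ h₁ h₂ m₁ m₂
      obtain ⟨q, hq, hu⟩ := hT x
      have e₁ : (z₁, x - z₁) = q := hu _ ⟨(hmem z₁).2 h₁, m₁, by ring⟩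
      have e₂ : (z₂, x - z₂) = q := hu _ ⟨(hmem z₂).2 h₂, m₂, by ring⟩
      exact congrArg Prod.fst (e₁.trans e₂.symm)
    have hE : ∀ y, F y + F (y - a) + F (y - b) = 1 := by
      intro y
      obtain ⟨⟨z, t⟩, ⟨hz, ht, hzt⟩, _⟩ := hT y
      simp only at hzt
      have hz' := (hmem z).1 hz
      have hTz : y - z ∈ T := by rw [show y - z = t by omega]; exact ht
      have hin : ∀ w : ℤ, F w = if w ∈ T then 1 else 0 := fun w => rfl
      rcases hz' with h | h | h
      · rw [h] at hTz
        have m0 : y ∈ T := by simpa using hTz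
        have mna : y - a ∉ T := fun hh =>
          ha0 (huniq y a 0 (Or.inr (Or.inl rfl)) (Or.inl rfl) hh hTz)
        have mnb : y - b ∉ T := fun hh =>
          hb0 (huniq y b 0 (Or.inr (Or.inr rfl)) (Or.inl rfl) hh hTz)
        rw [hin, hin, hin, if_pos m0, if_neg mna, if_neg mnb]; norm_num
      · rw [h] at hTz
        have mn0 : y ∉ T := fun hh =>
          ha0 ((huniq y 0 a (Or.inl rfl) (Or.inr (Or.inl rfl)) (by simpa using hh) hTz).symm)
        have mnb : y - b ∉ T := fun hh =>
          hab ((huniq y b a (Or.inr (Or.inr rfl)) (Or.inr (Or.inl rfl)) hh hTz).symm)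
        rw [hin, hin, hin, if_neg mn0, if_pos hTz, if_neg mnb]; norm_num
      · rw [h] at hTz
        have mn0 : y ∉ T := fun hh =>
          hb0 ((huniq y 0 b (Or.inl rfl) (Or.inr (Or.inr rfl)) (by simpa using hh) hTz).symm)
        have mna : y - a ∉ T := fun hh =>
          hab (huniq y a b (Or.inr (Or.inl rfl)) (Or.inr (Or.inr rfl)) hh hTz)
        rw [hin, hin, hin, if_neg mn0, if_neg mna, if_pos hTz]; norm_num
    clear hT
    have htri := tri F a b h01 hE
    have pa : ∀ x, F (x + 3*a) = F x := by
      intro x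
      have h := (htri (x + 3*a)).1
      rw [show x + 3*a - 3*a = x by ring] at h
      exact h.symm
    have pb : ∀ x, F (x + 3*b) = F x := by
      intro x
      have h := (htri (x + 3*b)).2
      rw [show x + 3*b - 3*b = x by ring] at h
      exact h.symm
    set d : ℤ := (Int.gcd a b : ℤ) with hddef
    have hd0 : d ≠ 0 := by
      simp only [hddef, ne_eq, Int.natCast_eq_zero]
      rw [Int.gcd_eq_zero_iff]
      rintro ⟨h, -⟩; exact ha0 h
    have pd : ∀ x, F (x + 3*d) = F x := by
      intro x
      have hbez : d = a * Int.gcdA a b + b * Int.gcdB a b := Int.gcd_eq_gcd_ab a b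
      have h1 : F (x + (3*b) * Int.gcdB a b + (3*a) * Int.gcdA a b)
          = F (x + (3*b) * Int.gcdB a b) := per_mul F (3*a) pa _ _
      have h2 : F (x + (3*b) * Int.gcdB a b) = F x := per_mul F (3*b) pb _ _
      calc F (x + 3*d) = F (x + (3*b) * Int.gcdB a b + (3*a) * Int.gcdA a b) := by
            congr 1; rw [hbez]; ring
        _ = F x := by rw [h1, h2]
    have hcong : ∀ x y : ℤ, (3*d) ∣ (y - x) → F y = F x := by
      intro x y ⟨s, hs⟩
      have h := per_mul F (3*d) pd s x
      rw [show x + 3*d*s = y by linarith] at h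
      exact h
    have hzero : ¬ (∀ x, F x = 0) := by
      intro h
      have := hE 0
      rw [h 0, h (0 - a), h (0 - b)] at this
      omega
    have f1 : ¬ ((3*d) ∣ a) := by
      intro hdvda
      refine hzero fun x => ?_
      have e1 : F (x - a) = F x := hcong x (x - a)
        (by rw [show x - a - x = -a by ring]; exact dvd_neg.2 hdvda)
      have q1 := hE x
      have q2 := h01 x
      have q3 := h01 (x - b)
      omega
    have f2 : ¬ ((3*d) ∣ b) := by
      intro hdvdb
      refine hzero fun x => ?_
      have e1 : F (x - b) = F x := hcong x (x - b)
        (by rw [show x - b - x = -b by ring]; exact dvd_neg.2 hdvdb)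
      have q1 := hE x
      have q2 := h01 x
      have q3 := h01 (x - a)
      omega
    have f3 : ¬ ((3*d) ∣ (b - a)) := by
      intro hdvdc
      have hza : ∀ x, F (x - a) = 0 := by
        intro x
        have e1 : F (x - a) = F (x - b) := hcong (x - b) (x - a)
          (by rw [show x - a - (x - b) = b - a by ring]; exact hdvdc)
        have q1 := hE x
        have q2 := h01 x
        have q3 := h01 (x - a)
        have q4 := h01 (x - b)
        omega
      refine hzero fun x => ?_
      have := hza (x + a)
      rwa [show x + a - a = x by ring] at this
    exact endgame j k n m a b d ha hb hn hm hab hd0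
      (Int.gcd_dvd_left a b) (Int.gcd_dvd_right a b) f1 f2 f3
  · rintro ⟨hjk, hmn⟩
    subst hjk
    have he : (3:ℤ)^j ≠ 0 := pow_ne_zero _ (by norm_num)
    refine ⟨{t : ℤ | (3:ℤ) ∣ t / 3^j}, fun x => ?_⟩
    have key : ∀ z : ℤ, (x - 3^j * z) / 3^j = x / 3^j - z := by
      intro z
      rw [show x - 3^j * z = x + (-z) * 3^j by ring, Int.add_mul_ediv_right x (-z) he]
      ring
    have hDa : (x - a) / 3^j = x / 3^j - n := by rw [ha]; exact key n
    have hDb : (x - b) / 3^j = x / 3^j - m := by rw [hb]; exact key m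
    have hmem : ∀ z : ℤ, z ∈ ({0, a, b} : Finset ℤ) ↔ (z = 0 ∨ z = a ∨ z = b) := by
      intro z; simp
    have h3 : (3 ∣ x / 3^j ∧ ¬ 3 ∣ (x / 3^j - n) ∧ ¬ 3 ∣ (x / 3^j - m)) ∨
        (¬ 3 ∣ x / 3^j ∧ 3 ∣ (x / 3^j - n) ∧ ¬ 3 ∣ (x / 3^j - m)) ∨
        (¬ 3 ∣ x / 3^j ∧ ¬ 3 ∣ (x / 3^j - n) ∧ 3 ∣ (x / 3^j - m)) := by
      omega
    rcases h3 with ⟨h1, h2, h3⟩ | ⟨h1, h2, h3⟩ | ⟨h1, h2, h3⟩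
    · refine ⟨(0, x), ⟨(hmem 0).2 (Or.inl rfl), h1, by simp⟩, ?_⟩
      rintro ⟨z, t⟩ ⟨hz, ht, hzt⟩
      simp only at hzt
      simp only [Set.mem_setOf_eq] at ht
      rcases (hmem z).1 hz with h | h | h
      · rw [h, show t = x by omega]
      · exfalso
        rw [show t = x - a by omega, hDa] at ht
        exact h2 ht
      · exfalso
        rw [show t = x - b by omega, hDb] at ht
        exact h3 ht
    · refine ⟨(a, x - a), ⟨(hmem a).2 (Or.inr (Or.inl rfl)), by
        simpa [Set.mem_setOf_eq, hDa] using h2, by ring⟩, ?_⟩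
      rintro ⟨z, t⟩ ⟨hz, ht, hzt⟩
      simp only at hzt
      simp only [Set.mem_setOf_eq] at ht
      rcases (hmem z).1 hz with h | h | h
      · exfalso
        rw [show t = x by omega] at ht
        exact h1 ht
      · rw [h, show t = x - a by omega]
      · exfalso
        rw [show t = x - b by omega, hDb] at ht
        exact h3 ht
    · refine ⟨(b, x - b), ⟨(hmem b).2 (Or.inr (Or.inr rfl)), by
        simpa [Set.mem_setOf_eq, hDb] using h3, by ring⟩, ?_⟩
      rintro ⟨z, t⟩ ⟨hz, ht, hzt⟩
      simp only at hzt
      simp only [Set.mem_setOf_eq] at ht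
      rcases (hmem z).1 hz with h | h | h
      · exfalso
        rw [show t = x by omega] at ht
        exact h1 ht
      · exfalso
        rw [show t = x - a by omega, hDa] at ht
        exact h2 ht
      · rw [h, show t = x - b by omega]
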